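/- Let R be a commutative ring, let D_x, D_y : R → R be two commuting derivations extended entrywise to matrices, let m ≥ 0, and let A₀,…,A_m and B₀,…,B_m be n×n matrices over R. Then the equations D_y A_k - D_x B_k + Σ_{i+j=k} (A_i·B_j - B_j·A_i) = 0 hold for all k = 0,…,m if and only if the (m+1)n×(m+1)n block lower-triangular Toeplitz matrices A⁽ᵐ⁾ and B⁽ᵐ⁾, whose (i,j) block (0 ≤ j ≤ i ≤ m) equals A_{i-j} resp. B_{i-j} and whose blocks above the diagonal are zero, constitute a zero-curvature representation: D_y A⁽ᵐ⁾ - D_x B⁽ᵐ⁾ + A⁽ᵐ⁾·B⁽ᵐ⁾ - B⁽ᵐ⁾·A⁽ᵐ⁾ = 0. -/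

import Mathlib

/-- A derivation of a commutative ring: an additive map satisfying the Leibniz rule. -/
def IsDeriv {R : Type*} [CommRing R] (D : R → R) : Prop :=
  (∀ a b, D (a + b) = D a + D b) ∧ (∀ a b, D (a * b) = D a * b + a * D b)

/-- The `(m+1)`-fold block lower-triangular Toeplitz matrix built from the matrices
`A 0, …, A m`: its `(i,j)` block is `A (i-j)` for `j ≤ i` and `0` above the diagonal. -/
def toeplitz {R : Type*} [CommRing R] {n : ℕ} (m : ℕ) (A : ℕ → Matrix (Fin n) (Fin n) R) :
    Matrix (Fin (m + 1) × Fin n) (Fin (m + 1) × Fin n) R :=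
  Matrix.of fun p q => if (q.1 : ℕ) ≤ (p.1 : ℕ) then A ((p.1 : ℕ) - (q.1 : ℕ)) p.2 q.2 else 0

/-- The equations `D_y A_k - D_x B_k + Σ_{i+j=k} [A_i, B_j] = 0` hold for all `k ≤ m`
if and only if the block lower-triangular Toeplitz matrices `A⁽ᵐ⁾, B⁽ᵐ⁾` constitute a
zero-curvature representation. -/
theorem truncated_family_iff_toeplitz_zcr {R : Type*} [CommRing R] {n : ℕ}
    (Dx Dy : R → R) (hDx : IsDeriv Dx) (hDy : IsDeriv Dy)
    (hcomm : ∀ a, Dx (Dy a) = Dy (Dx a))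
    (m : ℕ) (A B : ℕ → Matrix (Fin n) (Fin n) R) :
    (∀ k ≤ m, (A k).map Dy - (B k).map Dx +
        ∑ ij ∈ Finset.HasAntidiagonal.antidiagonal k, (A ij.1 * B ij.2 - B ij.2 * A ij.1) = 0) ↔
    ((toeplitz m A).map Dy - (toeplitz m B).map Dx +
        (toeplitz m A * toeplitz m B - toeplitz m B * toeplitz m A) = 0) := by
  have hD0x : Dx 0 = 0 := by
    have := hDx.1 0 0; simpa using this.symm
  have hD0y : Dy 0 = 0 := by
    have := hDy.1 0 0; simpa using this.symm
  have happ : ∀ {p q : Type} {M : Matrix p q R},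
      M = 0 → ∀ a b, M a b = 0 := by
    intro p q M hM a b; rw [hM]; rfl
  -- entrywise formula for products of Toeplitz matrices
  have key : ∀ (X Y : ℕ → Matrix (Fin n) (Fin n) R)
      (i j : Fin (m + 1)) (a b : Fin n),
      (toeplitz m X * toeplitz m Y) (i, a) (j, b) =
        if (j : ℕ) ≤ (i : ℕ) then
          (∑ ij ∈ Finset.HasAntidiagonal.antidiagonal ((i : ℕ) - (j : ℕ)), X ij.1 * Y ij.2) a b
        else 0 := by
    intro X Y i j a b
    rw [Matrix.mul_apply, Fintype.sum_prod_type]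
    have step1 : ∀ r : Fin (m + 1),
        (∑ c : Fin n, toeplitz m X (i, a) (r, c) * toeplitz m Y (r, c) (j, b)) =
        if (j : ℕ) ≤ (r : ℕ) ∧ (r : ℕ) ≤ (i : ℕ) then
          (X ((i : ℕ) - (r : ℕ)) * Y ((r : ℕ) - (j : ℕ))) a b else 0 := by
      intro r
      simp only [toeplitz, Matrix.of_apply]
      by_cases h1 : (r : ℕ) ≤ (i : ℕ) <;> by_cases h2 : (j : ℕ) ≤ (r : ℕ) <;>
        simp only [h1, h2, if_true, if_false, true_and, false_and, and_true, and_false,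
          zero_mul, mul_zero, Finset.sum_const_zero, Matrix.mul_apply]
    rw [Finset.sum_congr rfl fun r _ => step1 r]
    by_cases hji : (j : ℕ) ≤ (i : ℕ)
    · simp only [hji, if_true, Matrix.sum_apply]
      rw [← Finset.sum_filter]
      refine Finset.sum_nbij' (fun r : Fin (m + 1) => ((i : ℕ) - (r : ℕ), (r : ℕ) - (j : ℕ)))
        (fun p => (⟨min ((j : ℕ) + p.2) m, by omega⟩ : Fin (m + 1))) ?_ ?_ ?_ ?_ ?_
      · intro r hr
        simp only [Finset.mem_filter, Finset.mem_univ, true_and] at hr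
        simp only [Finset.HasAntidiagonal.mem_antidiagonal]
        omega
      · intro p hp
        simp only [Finset.HasAntidiagonal.mem_antidiagonal] at hp
        simp only [Finset.mem_filter, Finset.mem_univ, true_and]
        have : (i : ℕ) ≤ m := by omega
        constructor <;> · (try simp only [Fin.val_mk]); omega
      · intro r hr
        simp only [Finset.mem_filter, Finset.mem_univ, true_and] at hr
        have hr2 : (r : ℕ) ≤ m := by omega
        apply Fin.ext
        try simp only [Fin.val_mk]
        omega
      · intro p hp
        simp only [Finset.HasAntidiagonal.mem_antidiagonal] at hp
        have hi : (i : ℕ) ≤ m := by omega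
        obtain ⟨p1, p2⟩ := p
        simp only [Finset.HasAntidiagonal.mem_antidiagonal] at hp
        simp only [Prod.mk.injEq]
        constructor <;> omega
      · intro r hr
        rfl
    · simp only [hji, if_false]
      apply Finset.sum_eq_zero
      intro r _
      rw [if_neg]
      omega
  have hswap : ∀ (k : ℕ) (a b : Fin n),
      (∑ ij ∈ Finset.HasAntidiagonal.antidiagonal k, (B ij.2 * A ij.1) a b) =
      ∑ ij ∈ Finset.HasAntidiagonal.antidiagonal k, (B ij.1 * A ij.2) a b := by
    intro k a b
    exact (Finset.Nat.sum_antidiagonal_swap (f := fun p => (B p.1 * A p.2) a b)).symm ▸ rfl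
  constructor
  · intro h
    ext ⟨i, a⟩ ⟨j, b⟩
    simp only [Matrix.add_apply, Matrix.sub_apply, Matrix.map_apply, Matrix.zero_apply]
    rw [key A B, key B A]
    by_cases hji : (j : ℕ) ≤ (i : ℕ)
    · simp only [toeplitz, Matrix.of_apply, hji, if_true]
      have h2 := happ (h ((i : ℕ) - (j : ℕ)) (by omega)) a b
      simp only [Matrix.add_apply, Matrix.sub_apply, Matrix.map_apply,
        Matrix.sum_apply] at h2
      rw [Finset.sum_sub_distrib, hswap] at h2
      simp only [Matrix.sum_apply]
      linear_combination h2
    · simp only [toeplitz, Matrix.of_apply, hji, if_false, hD0x, hD0y]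
      ring
  · intro h k hk
    ext a b
    have h2 := happ h ((⟨k, by omega⟩ : Fin (m + 1)), a) ((⟨0, by omega⟩ : Fin (m + 1)), b)
    simp only [Matrix.add_apply, Matrix.sub_apply, Matrix.map_apply,
      Matrix.zero_apply] at h2
    rw [key A B, key B A] at h2
    simp only [toeplitz, Matrix.of_apply, Nat.zero_le, if_true, Nat.sub_zero,
      Matrix.sum_apply] at h2
    simp only [Matrix.add_apply, Matrix.sub_apply, Matrix.map_apply,
      Matrix.zero_apply, Matrix.sum_apply]
    rw [Finset.sum_sub_distrib, hswap]
    linear_combination h2
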